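/- arXiv:1909.12762 — 4 statements merged into one kernel-verified Lean document; each statement's English description precedes it below -/
import Mathlib

section
/- Assume (H1)–(H4) hold with constants λ_m, λ_M, C_M > 0 and let δ⋆ := min{2, λ_m, 4λ_mλ_M/(4λ_M + C_M²(1+λ_M))}. Then for every δ ∈ (0, δ⋆) there exists λ > 0 (depending on δ, λ_m, λ_M, C_M) such that λ H_δ[F] ≤ D_δ[F] for all F ∈ H, where H_δ[F] := ½‖F‖² + δ⟨AF, F⟩ and D_δ[F] := −⟨LF, F⟩ + δ⟨ATΠF, F⟩ − δ⟨TAF, F⟩ + δ⟨AT(Id − Π)F, F⟩ − δ⟨ALF, F⟩. -/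
open scoped RealInnerProductSpace

set_option maxHeartbeats 1000000

/-- **Proposition 2 (ii)** (entropy–entropy production inequality) from the abstract
hypocoercivity method: under (H1)–(H4), for every `δ ∈ (0, δ⋆)` there is `λ > 0` with
`λ H_δ[F] ≤ D_δ[F]` for all `F`, where `H_δ[F] = ½‖F‖² + δ⟨AF,F⟩` and
`D_δ[F] = -⟨LF,F⟩ + δ⟨ATΠF,F⟩ - δ⟨TAF,F⟩ + δ⟨AT(Id-Π)F,F⟩ - δ⟨ALF,F⟩`. -/
theorem entropy_production_hypocoercivity
    {H : Type*} [NormedAddCommGroup H] [InnerProductSpace ℝ H] [CompleteSpace H]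
    (L T P A : H →L[ℝ] H)
    -- L self-adjoint, T skew-adjoint
    (hLsa : IsSelfAdjoint L)
    (hTskew : ContinuousLinearMap.adjoint T = -T)
    -- P is the orthogonal projection onto the null space of L
    (hPsa : IsSelfAdjoint P)
    (hPidem : P ∘L P = P)
    (hPrange : ∀ F : H, L (P F) = 0)
    (hPker : ∀ F : H, L F = 0 → P F = F)
    -- A = (Id + (TΠ)*TΠ)⁻¹ (TΠ)*
    (hPA : P ∘L A = A)
    (hAdef : ∀ F : H,
      A F + (ContinuousLinearMap.adjoint (T ∘L P)) ((T ∘L P) (A F))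
        = (ContinuousLinearMap.adjoint (T ∘L P)) F)
    -- constants
    (lm lM CM : ℝ) (hlm : 0 < lm) (hlM : 0 < lM) (hCM : 0 < CM)
    -- (H1) microscopic coercivity
    (hH1 : ∀ F : H, lm * ‖F - P F‖ ^ 2 ≤ - ⟪L F, F⟫)
    -- (H2) macroscopic coercivity
    (hH2 : ∀ F : H, lM * ‖P F‖ ^ 2 ≤ ‖T (P F)‖ ^ 2)
    -- (H3) parabolic macroscopic dynamics
    (hH3 : ∀ F : H, P (T (P F)) = 0)
    -- (H4) bounded auxiliary operators
    (hH4 : ∀ F : H, ‖A (T (F - P F))‖ + ‖A (L F)‖ ≤ CM * ‖F - P F‖)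
    (δ : ℝ)
    (hδ : δ ∈ Set.Ioo 0 (min 2 (min lm (4 * lm * lM / (4 * lM + CM ^ 2 * (1 + lM)))))) :
    ∃ lam > (0 : ℝ), ∀ F : H,
      lam * (1 / 2 * ‖F‖ ^ 2 + δ * ⟪A F, F⟫)
        ≤ - ⟪L F, F⟫ + δ * ⟪A (T (P F)), F⟫ - δ * ⟪T (A F), F⟫
            + δ * ⟪A (T (F - P F)), F⟫ - δ * ⟪A (L F), F⟫ := by
  obtain ⟨hδ0, hδlt⟩ := hδ
  have hδ2 : δ < 2 := lt_of_lt_of_le hδlt (min_le_left _ _)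
  have hδlm : δ < lm := lt_of_lt_of_le hδlt ((min_le_right _ _).trans (min_le_left _ _))
  have hδ3 : δ < 4 * lm * lM / (4 * lM + CM ^ 2 * (1 + lM)) :=
    lt_of_lt_of_le hδlt ((min_le_right _ _).trans (min_le_right _ _))
  have h1lM : (0:ℝ) < 1 + lM := by linarith
  -- adjoint toolkit
  have hPadj : ∀ x y : H, ⟪P x, y⟫ = ⟪x, P y⟫ := by
    intro x y
    conv_lhs => rw [← hPsa.adjoint_eq]
    exact ContinuousLinearMap.adjoint_inner_left P y x
  have hPP : ∀ x : H, P (P x) = P x := by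
    intro x
    have h := congrArg (fun (S : H →L[ℝ] H) => S x) hPidem
    simpa using h
  have hPA' : ∀ x : H, P (A x) = A x := by
    intro x
    have h := congrArg (fun (S : H →L[ℝ] H) => S x) hPA
    simpa using h
  have hBadjL : ∀ z w : H, ⟪(ContinuousLinearMap.adjoint (T ∘L P)) z, w⟫ = ⟪z, T (P w)⟫ := by
    intro z w
    simpa using ContinuousLinearMap.adjoint_inner_left (T ∘L P) w z
  -- orthogonality and Pythagoras
  have hortho : ∀ F : H, ⟪P F, F - P F⟫ = 0 := by
    intro F
    have h1 : ⟪P F, P F⟫ = ⟪F, P F⟫ := by rw [hPadj F (P F), hPP]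
    have h2 : ⟪P F, F⟫ = ⟪F, P F⟫ := real_inner_comm _ _
    rw [inner_sub_right, h1, h2, sub_self]
  have hnormsq : ∀ F : H, ‖F‖ ^ 2 = ‖F - P F‖ ^ 2 + ‖P F‖ ^ 2 := by
    intro F
    have hsum : P F + (F - P F) = F := by abel
    have h := norm_add_sq_real (P F) (F - P F)
    rw [hsum, hortho F] at h
    linarith
  -- ⟪P F, T (A F)⟫ = 0
  have hPTA : ∀ F : H, ⟪P F, T (A F)⟫ = 0 := by
    intro F
    rw [hPadj]
    conv_lhs => rw [← hPA' F, hH3 (A F)]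
    exact inner_zero_right _
  -- key bound on A F and T (A F)
  have hAb : ∀ F : H, ‖A F‖ ^ 2 + ‖T (A F)‖ ^ 2 ≤ ‖F - P F‖ * ‖T (A F)‖ := by
    intro F
    have h := congrArg (fun z : H => ⟪z, A F⟫) (hAdef F)
    simp only [inner_add_left] at h
    rw [hBadjL, hBadjL] at h
    simp only [ContinuousLinearMap.comp_apply, hPA'] at h
    -- h : ⟪A F, A F⟫ + ⟪T (A F), T (A F)⟫ = ⟪F, T (A F)⟫
    have hsplit : ⟪F, T (A F)⟫ = ⟪F - P F, T (A F)⟫ := by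
      rw [inner_sub_left, hPTA F, sub_zero]
    rw [real_inner_self_eq_norm_sq, real_inner_self_eq_norm_sq, hsplit] at h
    calc ‖A F‖ ^ 2 + ‖T (A F)‖ ^ 2 = ⟪F - P F, T (A F)⟫ := h
      _ ≤ ‖F - P F‖ * ‖T (A F)‖ := real_inner_le_norm _ _
  have hTAle : ∀ F : H, ‖T (A F)‖ ≤ ‖F - P F‖ := by
    intro F
    nlinarith [hAb F, sq_nonneg (‖A F‖), norm_nonneg (T (A F)), norm_nonneg (F - P F),
      sq_nonneg (‖T (A F)‖ - ‖F - P F‖)]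
  have hAle : ∀ F : H, ‖A F‖ ≤ ‖F - P F‖ / 2 := by
    intro F
    nlinarith [hAb F, norm_nonneg (A F), norm_nonneg (T (A F)), norm_nonneg (F - P F),
      sq_nonneg (‖F - P F‖ - 2 * ‖T (A F)‖), sq_nonneg (‖A F‖ - ‖F - P F‖ / 2),
      sq_nonneg (‖A F‖ + ‖F - P F‖ / 2)]
  -- macroscopic estimate : ⟪A (T (P F)), F⟫ ≥ lM/(1+lM) ‖P F‖²
  have hmacro : ∀ F : H, lM / (1 + lM) * ‖P F‖ ^ 2 ≤ ⟪A (T (P F)), F⟫ := by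
    intro F
    set B := ContinuousLinearMap.adjoint (T ∘L P) with hB
    set g := A (T (P F)) with hg
    set v := P F - g with hv
    have hPg : P g = g := hPA' _
    have hPv : P v = v := by rw [hv, map_sub, hPP, hPg]
    have hAe := hAdef (T (P F))
    -- hAe : g + B ((T ∘L P) g) = B (T (P F))
    have hveq : v + B (T (P v)) = P F := by
      have e1 : T (P v) = T (P F) - T g := by rw [hPv, hv, map_sub]
      rw [e1, map_sub]
      have e2 : (T ∘L P) g = T g := by
        simp [ContinuousLinearMap.comp_apply, hPg]
      rw [e2] at hAe
      rw [← hAe, hv, hg]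
      abel
    have hTv : T (P v) = T v := by rw [hPv]
    have hipv : ⟪v, P F⟫ = ‖v‖ ^ 2 + ‖T v‖ ^ 2 := by
      conv_lhs => rw [← hveq]
      rw [inner_add_right, real_inner_self_eq_norm_sq]
      congr 1
      rw [real_inner_comm, hBadjL, hTv]
      exact real_inner_self_eq_norm_sq _
    have hH2v := hH2 v
    rw [hPv] at hH2v
    have hTv2 : lM * ‖v‖ ^ 2 ≤ ‖T v‖ ^ 2 := hH2v
    have hlow : (1 + lM) * ‖v‖ ^ 2 ≤ ⟪v, P F⟫ := by rw [hipv]; nlinarith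
    have hCS : ⟪v, P F⟫ ≤ ‖v‖ * ‖P F‖ := real_inner_le_norm _ _
    have hvsmall : (1 + lM) * ⟪v, P F⟫ ≤ ‖P F‖ ^ 2 := by
      nlinarith [sq_nonneg ((1 + lM) * ‖v‖ - ‖P F‖), norm_nonneg v, norm_nonneg (P F)]
    have hgF : ⟪g, F⟫ = ‖P F‖ ^ 2 - ⟪v, P F⟫ := by
      have e1 : ⟪g, F⟫ = ⟪g, P F⟫ := by
        conv_lhs => rw [← hPg]
        rw [hPadj]
      have e2 : ⟪g, P F⟫ = ⟪P F, P F⟫ - ⟪v, P F⟫ := by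
        rw [hv, inner_sub_left]
        ring
      rw [e1, e2, real_inner_self_eq_norm_sq]
    rw [hgF]
    rw [div_mul_eq_mul_div, div_le_iff₀ h1lM]
    nlinarith [hvsmall]
  -- transport mixing bound : ⟪T (A F), F⟫ ≤ ‖F - P F‖²
  have hT3 : ∀ F : H, ⟪T (A F), F⟫ ≤ ‖F - P F‖ ^ 2 := by
    intro F
    have e1 : ⟪T (A F), F⟫ = ⟪F - P F, T (A F)⟫ := by
      rw [real_inner_comm, inner_sub_left, hPTA F, sub_zero]
    rw [e1]
    calc ⟪F - P F, T (A F)⟫ ≤ ‖F - P F‖ * ‖T (A F)‖ := real_inner_le_norm _ _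
      _ ≤ ‖F - P F‖ * ‖F - P F‖ := by
          exact mul_le_mul_of_nonneg_left (hTAle F) (norm_nonneg _)
      _ = ‖F - P F‖ ^ 2 := by ring
  -- auxiliary-operator mixing bound
  have hmix : ∀ F : H,
      -(CM * ‖F - P F‖ * ‖P F‖) ≤ ⟪A (T (F - P F)), F⟫ - ⟪A (L F), F⟫ := by
    intro F
    have e1 : ∀ z : H, ⟪A z, F⟫ = ⟪A z, P F⟫ := by
      intro z
      conv_lhs => rw [← hPA' z]
      rw [hPadj]
    have b1 : |⟪A (T (F - P F)), P F⟫| ≤ ‖A (T (F - P F))‖ * ‖P F‖ :=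
      abs_real_inner_le_norm _ _
    have b2 : |⟪A (L F), P F⟫| ≤ ‖A (L F)‖ * ‖P F‖ := abs_real_inner_le_norm _ _
    have h4 := hH4 F
    rw [e1, e1]
    have hy : (0:ℝ) ≤ ‖P F‖ := norm_nonneg _
    have habs1 := abs_le.mp b1
    have habs2 := abs_le.mp b2
    nlinarith [mul_le_mul_of_nonneg_right h4 hy]
  -- upper bound on the entropy
  have hHb : ∀ F : H,
      1 / 2 * ‖F‖ ^ 2 + δ * ⟪A F, F⟫ ≤ (1 + δ) / 2 * (‖F - P F‖ ^ 2 + ‖P F‖ ^ 2) := by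
    intro F
    have hCS : ⟪A F, F⟫ ≤ ‖A F‖ * ‖F‖ := real_inner_le_norm _ _
    have hA2 : ‖A F‖ * ‖F‖ ≤ ‖F - P F‖ / 2 * ‖F‖ :=
      mul_le_mul_of_nonneg_right (hAle F) (norm_nonneg _)
    have hx2 : ‖F - P F‖ / 2 * ‖F‖ ≤ (‖F - P F‖ ^ 2 + ‖F‖ ^ 2) / 4 := by
      nlinarith [sq_nonneg (‖F - P F‖ - ‖F‖)]
    have hn := hnormsq F
    have hAF : ⟪A F, F⟫ ≤ (‖F - P F‖ ^ 2 + ‖P F‖ ^ 2) / 2 := by nlinarith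
    have hmul := mul_le_mul_of_nonneg_left hAF hδ0.le
    nlinarith
  -- numeric constants
  set a := lm - δ with ha_def
  set b := δ * CM with hb_def
  set c := δ * lM / (1 + lM) with hc_def
  have ha : 0 < a := by rw [ha_def]; linarith
  have hc : 0 < c := by rw [hc_def]; positivity
  have hcb : c * (1 + lM) = δ * lM := by rw [hc_def]; field_simp
  have hden : (0:ℝ) < 4 * lM + CM ^ 2 * (1 + lM) := by positivity
  have hδ3' : δ * (4 * lM + CM ^ 2 * (1 + lM)) < 4 * lm * lM := (lt_div_iff₀ hden).mp hδ3
  have hb2 : b ^ 2 < 4 * a * c := by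
    have h1 : b ^ 2 * (1 + lM) < 4 * a * (c * (1 + lM)) := by
      rw [hcb, hb_def, ha_def]
      nlinarith [mul_lt_mul_of_pos_left hδ3' hδ0]
    nlinarith [h1, hc, ha]
  have hac : 0 < a + c := by linarith
  set κ := (4 * a * c - b ^ 2) / (4 * (a + c)) with hκ_def
  have hκpos : 0 < κ := by
    apply div_pos (by linarith) (by linarith)
  have hκ_eq : κ * (4 * (a + c)) = 4 * a * c - b ^ 2 := by
    rw [hκ_def]
    field_simp
  have hκa : κ < a := by nlinarith [hκ_eq, sq_nonneg b, hc, ha, hac]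
  have hdisc : 4 * (a - κ) * (c - κ) = b ^ 2 + 4 * κ ^ 2 := by nlinarith [hκ_eq]
  have key : ∀ x y : ℝ, κ * (x ^ 2 + y ^ 2) ≤ a * x ^ 2 - b * x * y + c * y ^ 2 := by
    intro x y
    nlinarith [sq_nonneg (2 * (a - κ) * x - b * y), sq_nonneg (κ * y), hdisc, hκa,
      mul_nonneg (sq_nonneg y) (sq_nonneg κ), sq_nonneg y]
  have h1δ : (0:ℝ) < 1 + δ := by linarith
  refine ⟨2 * κ / (1 + δ), by positivity, ?_⟩
  intro F
  set x := ‖F - P F‖ with hx_def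
  set y := ‖P F‖ with hy_def
  have hD : a * x ^ 2 - b * x * y + c * y ^ 2 ≤
      - ⟪L F, F⟫ + δ * ⟪A (T (P F)), F⟫ - δ * ⟪T (A F), F⟫
        + δ * ⟪A (T (F - P F)), F⟫ - δ * ⟪A (L F), F⟫ := by
    have e1 := hH1 F
    have e2 := mul_le_mul_of_nonneg_left (hmacro F) hδ0.le
    have e3 := mul_le_mul_of_nonneg_left (hT3 F) hδ0.le
    have e4 := mul_le_mul_of_nonneg_left (hmix F) hδ0.le
    have ec : δ * (lM / (1 + lM) * y ^ 2) = c * y ^ 2 := by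
      rw [hc_def]; ring
    rw [ec] at e2
    rw [ha_def, hb_def]
    nlinarith [e1, e2, e3, e4]
  have hlamH : 2 * κ / (1 + δ) * (1 / 2 * ‖F‖ ^ 2 + δ * ⟪A F, F⟫) ≤ κ * (x ^ 2 + y ^ 2) := by
    have h1 := hHb F
    have h2 := mul_le_mul_of_nonneg_left h1 (by positivity : (0:ℝ) ≤ 2 * κ / (1 + δ))
    calc 2 * κ / (1 + δ) * (1 / 2 * ‖F‖ ^ 2 + δ * ⟪A F, F⟫)
        ≤ 2 * κ / (1 + δ) * ((1 + δ) / 2 * (x ^ 2 + y ^ 2)) := h2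
      _ = κ * (x ^ 2 + y ^ 2) := by
          field_simp
  calc 2 * κ / (1 + δ) * (1 / 2 * ‖F‖ ^ 2 + δ * ⟪A F, F⟫)
      ≤ κ * (x ^ 2 + y ^ 2) := hlamH
    _ ≤ a * x ^ 2 - b * x * y + c * y ^ 2 := key x y
    _ ≤ _ := hD
end

section
/- Let H be a real Hilbert space, T : H → H a bounded linear operator, Π : H → H an orthogonal projection (Π self-adjoint, Π² = Π) with ΠTΠ = 0, and A : H → H a bounded linear operator satisfying ΠA = A and A F + (TΠ)*(TΠ)(A F) = (TΠ)* F for all F ∈ H. Then for every F ∈ H and every μ > 0 one has 2‖AF‖² + (2 − 1/μ)‖TAF‖² ≤ μ ‖(Id − Π)F‖²; in particular ‖AF‖ ≤ ½ ‖(Id − Π)F‖ and ‖TAF‖ ≤ ‖(Id − Π)F‖. -/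
open scoped RealInnerProductSpace

/-- The elementary bounds on the auxiliary operator `A = (Id + (TΠ)*TΠ)⁻¹(TΠ)*`:
for every `F` and every `μ > 0`,
`2‖AF‖² + (2 - 1/μ)‖TAF‖² ≤ μ‖(Id-Π)F‖²`, and in particular
`‖AF‖ ≤ ½‖(Id-Π)F‖` and `‖TAF‖ ≤ ‖(Id-Π)F‖`. -/
theorem auxiliary_operator_bounds
    {H : Type*} [NormedAddCommGroup H] [InnerProductSpace ℝ H] [CompleteSpace H]
    (T P A : H →L[ℝ] H)
    -- P is an orthogonal projection
    (hPsa : IsSelfAdjoint P)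
    (hPidem : P ∘L P = P)
    -- ΠTΠ = 0
    (hPTP : ∀ F : H, P (T (P F)) = 0)
    -- ΠA = A and A = (Id + (TΠ)*TΠ)⁻¹(TΠ)*
    (hPA : P ∘L A = A)
    (hAdef : ∀ F : H,
      A F + (ContinuousLinearMap.adjoint (T ∘L P)) ((T ∘L P) (A F))
        = (ContinuousLinearMap.adjoint (T ∘L P)) F)
    (F : H) :
    (∀ μ : ℝ, 0 < μ →
        2 * ‖A F‖ ^ 2 + (2 - 1 / μ) * ‖T (A F)‖ ^ 2 ≤ μ * ‖F - P F‖ ^ 2) ∧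
      ‖A F‖ ≤ 1 / 2 * ‖F - P F‖ ∧ ‖T (A F)‖ ≤ ‖F - P F‖ := by
  have hu : P (A F) = A F := by
    have := congrArg (fun G => G F) hPA
    simpa using this
  have hsym : ∀ x y : H, ⟪P x, y⟫ = ⟪x, P y⟫ := fun x y =>
    hPsa.isSymmetric x y
  have hTP : (T ∘L P) (A F) = T (A F) := by
    simp [hu]
  -- key identity
  have hkey : ‖A F‖ ^ 2 + ‖T (A F)‖ ^ 2 = ⟪F - P F, T (A F)⟫ := by
    have h1 := congrArg (fun x : H => ⟪x, A F⟫) (hAdef F)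
    simp only [inner_add_left] at h1
    rw [ContinuousLinearMap.adjoint_inner_left, ContinuousLinearMap.adjoint_inner_left] at h1
    -- h1 : ⟪A F, A F⟫ + ⟪(T∘P)(A F), (T∘P)(A F)⟫... careful: adjoint_inner_left gives ⟪x, (T∘P)(A F)⟫
    rw [hTP] at h1
    have horth : ⟪P F, T (A F)⟫ = 0 := by
      rw [hsym]
      rw [← hu, hPTP]
      simp
    have h2 : ⟪F - P F, T (A F)⟫ = ⟪F, T (A F)⟫ := by
      rw [inner_sub_left, horth]; ring
    rw [h2, ← h1, real_inner_self_eq_norm_sq, real_inner_self_eq_norm_sq]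
  have hcs : ⟪F - P F, T (A F)⟫ ≤ ‖F - P F‖ * ‖T (A F)‖ := real_inner_le_norm _ _
  have hmain : ∀ μ : ℝ, 0 < μ →
      2 * ‖A F‖ ^ 2 + (2 - 1 / μ) * ‖T (A F)‖ ^ 2 ≤ μ * ‖F - P F‖ ^ 2 := by
    intro μ hμ
    have hb : ‖A F‖ ^ 2 + ‖T (A F)‖ ^ 2 ≤ ‖F - P F‖ * ‖T (A F)‖ := hkey ▸ hcs
    have h5 : 0 ≤ (μ * ‖F - P F‖ - ‖T (A F)‖) ^ 2 / μ :=
      div_nonneg (sq_nonneg _) hμ.le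
    have h6 : (μ * ‖F - P F‖ - ‖T (A F)‖) ^ 2 / μ
        = μ * ‖F - P F‖ ^ 2 - 2 * ‖F - P F‖ * ‖T (A F)‖ + ‖T (A F)‖ ^ 2 / μ := by
      field_simp
      ring
    rw [h6] at h5
    have h7 : (1 / μ) * ‖T (A F)‖ ^ 2 = ‖T (A F)‖ ^ 2 / μ := by ring
    nlinarith [h5, hb]
  refine ⟨hmain, ?_, ?_⟩
  · have h := hmain (1/2) (by norm_num)
    have h1 : (0:ℝ) ≤ ‖A F‖ := norm_nonneg _
    have h2 : (0:ℝ) ≤ ‖F - P F‖ := norm_nonneg _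
    nlinarith [h, sq_nonneg (‖A F‖ - 1/2 * ‖F - P F‖), sq_nonneg (‖A F‖ + 1/2 * ‖F - P F‖)]
  · have h := hmain 1 (by norm_num)
    have h1 : (0:ℝ) ≤ ‖T (A F)‖ := norm_nonneg _
    have h2 : (0:ℝ) ≤ ‖F - P F‖ := norm_nonneg _
    nlinarith [sq_nonneg (‖A F‖), sq_nonneg (‖T (A F)‖ - ‖F - P F‖)]
end

section
/- Assume (H1)–(H4) hold with constants λ_m, λ_M, C_M > 0, and set ζ := 2λ_mλ_M/(C_M²(1+λ_M)) and η := λ_mλ_M²/(C_M²(1+λ_M)²). Then there exists ε₀ > 0 such that for every ε ∈ (0, ε₀) and every F ∈ H, η ε H_{ζε}[F] ≤ D_{ζε,ε}[F], where H_δ[F] := ½‖F‖² + δ⟨AF, F⟩ and D_{δ,ε}[F] := −(1/ε)⟨LF, F⟩ + δ⟨ATΠF, F⟩ − δ⟨TAF, F⟩ + δ⟨AT(Id − Π)F, F⟩ − (δ/ε)⟨ALF, F⟩. -/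
open scoped RealInnerProductSpace


private lemma entropy_aux_bounds (a t x : ℝ) (ht0 : 0 ≤ t) (hx0 : 0 ≤ x)
    (hq : a ^ 2 + t ^ 2 ≤ x * t) : t ≤ x ∧ a ≤ x / 2 := by
  constructor
  · rcases eq_or_lt_of_le ht0 with h0 | h0
    · rw [← h0]; exact hx0
    · have htt : t * t ≤ x * t := by nlinarith [sq_nonneg a]
      exact le_of_mul_le_mul_right htt h0
  · have ha2 : a ^ 2 ≤ (x / 2) ^ 2 := by nlinarith [sq_nonneg (x - 2 * t)]
    nlinarith

private lemma entropy_aux_c2 (lM κ y p q c : ℝ) (hlM : 0 < lM) (hκdef : κ = lM / (1 + lM))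
    (htri : y ≤ p + q) (hy0 : 0 ≤ y) (hglow : lM * p ^ 2 + q ^ 2 ≤ c) :
    κ * y ^ 2 ≤ c := by
  have h1lM : (0:ℝ) < 1 + lM := by linarith
  have hyq : y ^ 2 ≤ (p + q) ^ 2 := by nlinarith
  have hmid : κ * y ^ 2 ≤ lM * p ^ 2 + q ^ 2 := by
    rw [hκdef, div_mul_eq_mul_div, div_le_iff₀ h1lM]
    nlinarith [sq_nonneg (lM * p - q), mul_le_mul_of_nonneg_left hyq hlM.le]
  linarith

private lemma entropy_aux_c6 (x y nF c : ℝ) (hFsq : nF ^ 2 = x ^ 2 + y ^ 2)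
    (hc : c ≤ (x / 2) * nF) : c ≤ (x ^ 2 + y ^ 2) / 2 := by
  nlinarith [sq_nonneg (x - nF), sq_nonneg y]

private lemma entropy_aux_c3 (c x t : ℝ) (h1 : c ≤ x * t) (h2 : t ≤ x) (h3 : 0 ≤ x) :
    c ≤ x ^ 2 := by nlinarith

private lemma entropy_aux_s1 (η ε ζ s c6 : ℝ) (hη : 0 < η) (hε0 : 0 < ε) (hζ : 0 < ζ)
    (hζε : ζ * ε ≤ 1 / 2) (h6u : c6 ≤ s / 2) (hs : 0 ≤ s) :
    η * ε ^ 2 * (1 / 2 * s + ζ * ε * c6) ≤ 3 / 4 * η * ε ^ 2 * s := by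
  have t1 : 0 ≤ η * ε ^ 2 * (ζ * ε) * (s / 2 - c6) := mul_nonneg (by positivity) (by linarith)
  have t2 : 0 ≤ (η * ε ^ 2 * s / 2) * (1 / 2 - ζ * ε) := mul_nonneg (by positivity) (by linarith)
  nlinarith [t1, t2]

private lemma entropy_aux_s5 (ζ ε CM x y c4 c5 n4 n5 : ℝ) (hζ : 0 < ζ) (hε0 : 0 < ε)
    (hε1 : ε ≤ 1) (hy0 : 0 ≤ y) (hn4 : 0 ≤ n4) (hn5 : 0 ≤ n5)
    (h4l : -(n4 * y) ≤ c4) (h5u : c5 ≤ n5 * y) (hH4 : n4 + n5 ≤ CM * x) :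
    -(ζ * ε * (CM * (x * y))) ≤ ζ * ε ^ 2 * c4 - ζ * ε * c5 := by
  have t1 : 0 ≤ ζ * ε ^ 2 * (c4 + n4 * y) := mul_nonneg (by positivity) (by linarith)
  have t2 : 0 ≤ ζ * ε * (n5 * y - c5) := mul_nonneg (by positivity) (by linarith)
  have t3 : 0 ≤ ζ * (ε - ε ^ 2) * (n4 * y) :=
    mul_nonneg (mul_nonneg hζ.le (by nlinarith)) (mul_nonneg hn4 hy0)
  have t4 : 0 ≤ ζ * ε * y * (CM * x - (n4 + n5)) := mul_nonneg (by positivity) (by linarith)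
  nlinarith [t1, t2, t3, t4]

private lemma entropy_aux_hA (ζ CM ε y x lm η : ℝ) (hlm : 0 < lm)
    (hsub : (ζ * CM * (ε * y)) ^ 2 = 4 * lm * η * (ε * y) ^ 2) :
    ζ * ε * (CM * (x * y)) ≤ 4 * lm / 5 * x ^ 2 + 5 * η / 4 * (ε ^ 2 * y ^ 2) := by
  nlinarith [sq_nonneg (8 * lm / 5 * x - ζ * CM * (ε * y)), hsub, hlm, sq_nonneg (ε * y)]

private lemma entropy_aux_poly (η ζ ε x y lm CM : ℝ) (hlm : 0 < lm)
    (hεsq : 5 * (ζ + 3 / 4 * η) * ε ^ 2 ≤ lm)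
    (hA : ζ * ε * (CM * (x * y)) ≤ 4 * lm / 5 * x ^ 2 + 5 * η / 4 * (ε ^ 2 * y ^ 2)) :
    3 / 4 * η * ε ^ 2 * (x ^ 2 + y ^ 2) + ζ * ε * (CM * (x * y)) + ζ * ε ^ 2 * x ^ 2
      ≤ lm * x ^ 2 + 2 * η * (ε ^ 2 * y ^ 2) := by
  have hx2 : (3 / 4 * η + ζ) * ε ^ 2 ≤ lm / 5 := by nlinarith
  have t5 : (3 / 4 * η + ζ) * ε ^ 2 * x ^ 2 ≤ lm / 5 * x ^ 2 :=
    mul_le_mul_of_nonneg_right hx2 (sq_nonneg x)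
  nlinarith [hA, t5]

private lemma entropy_aux_key (lm η ζ κ CM ε x y c1 c2 c3 c4 c5 c6 n4 n5 : ℝ)
    (hlm : 0 < lm) (hη : 0 < η) (hζ : 0 < ζ)
    (hζε : ζ * ε ≤ 1 / 2) (hεsq : 5 * (ζ + 3 / 4 * η) * ε ^ 2 ≤ lm)
    (hζκ : ζ * κ = 2 * η) (hζCM : ζ ^ 2 * CM ^ 2 = 4 * lm * η)
    (h1 : lm * x ^ 2 ≤ c1) (h2 : κ * y ^ 2 ≤ c2) (h3 : c3 ≤ x ^ 2)
    (h4 : -(n4 * y) ≤ c4) (h5 : c5 ≤ n5 * y) (hn : n4 + n5 ≤ CM * x)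
    (hn4 : 0 ≤ n4) (hn5 : 0 ≤ n5) (h6 : c6 ≤ (x ^ 2 + y ^ 2) / 2)
    (hx0 : 0 ≤ x) (hy0 : 0 ≤ y) (hε0 : 0 < ε) (hε1 : ε ≤ 1) :
    η * ε ^ 2 * (1 / 2 * (x ^ 2 + y ^ 2) + ζ * ε * c6)
      ≤ c1 + ζ * ε ^ 2 * c2 - ζ * ε ^ 2 * c3 + ζ * ε ^ 2 * c4 - ζ * ε * c5 := by
  have s1 := entropy_aux_s1 η ε ζ (x ^ 2 + y ^ 2) c6 hη hε0 hζ hζε h6 (by positivity)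
  have s3 : ζ * ε ^ 2 * (κ * y ^ 2) ≤ ζ * ε ^ 2 * c2 :=
    mul_le_mul_of_nonneg_left h2 (by positivity)
  have s4 : ζ * ε ^ 2 * c3 ≤ ζ * ε ^ 2 * x ^ 2 :=
    mul_le_mul_of_nonneg_left h3 (by positivity)
  have s5 := entropy_aux_s5 ζ ε CM x y c4 c5 n4 n5 hζ hε0 hε1 hy0 hn4 hn5 h4 h5 hn
  have hsub : (ζ * CM * (ε * y)) ^ 2 = 4 * lm * η * (ε * y) ^ 2 := by
    have hh : (ζ * CM * (ε * y)) ^ 2 = ζ ^ 2 * CM ^ 2 * (ε * y) ^ 2 := by ring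
    rw [hh, hζCM]
  have hA := entropy_aux_hA ζ CM ε y x lm η hlm hsub
  have poly := entropy_aux_poly η ζ ε x y lm CM hlm hεsq hA
  have hrw : ζ * ε ^ 2 * (κ * y ^ 2) = 2 * η * (ε ^ 2 * y ^ 2) := by
    have hh : ζ * ε ^ 2 * (κ * y ^ 2) = (ζ * κ) * (ε ^ 2 * y ^ 2) := by ring
    rw [hh, hζκ]
  rw [hrw] at s3
  linarith [s1, s3, s4, s5, poly, h1]


/-- **Corollary (uniform hypocoercivity estimate in the diffusion limit)**: under
(H1)–(H4), with `ζ = 2λ_mλ_M/(C_M²(1+λ_M))` and `η = λ_mλ_M²/(C_M²(1+λ_M)²)`, there is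
`ε₀ > 0` such that for all `ε ∈ (0, ε₀)` and `F ∈ H`, `η ε H_{ζε}[F] ≤ D_{ζε,ε}[F]`,
where `H_δ[F] = ½‖F‖² + δ⟨AF,F⟩` and
`D_{δ,ε}[F] = -(1/ε)⟨LF,F⟩ + δ⟨ATΠF,F⟩ - δ⟨TAF,F⟩ + δ⟨AT(Id-Π)F,F⟩ - (δ/ε)⟨ALF,F⟩`. -/
theorem entropy_production_diffusion_limit
    {H : Type*} [NormedAddCommGroup H] [InnerProductSpace ℝ H] [CompleteSpace H]
    (L T P A : H →L[ℝ] H)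
    -- L self-adjoint, T skew-adjoint
    (hLsa : IsSelfAdjoint L)
    (hTskew : ContinuousLinearMap.adjoint T = -T)
    -- P is the orthogonal projection onto the null space of L
    (hPsa : IsSelfAdjoint P)
    (hPidem : P ∘L P = P)
    (hPrange : ∀ F : H, L (P F) = 0)
    (hPker : ∀ F : H, L F = 0 → P F = F)
    -- A = (Id + (TΠ)*TΠ)⁻¹ (TΠ)*
    (hPA : P ∘L A = A)
    (hAdef : ∀ F : H,
      A F + (ContinuousLinearMap.adjoint (T ∘L P)) ((T ∘L P) (A F))
        = (ContinuousLinearMap.adjoint (T ∘L P)) F)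
    -- constants
    (lm lM CM : ℝ) (hlm : 0 < lm) (hlM : 0 < lM) (hCM : 0 < CM)
    -- (H1) microscopic coercivity
    (hH1 : ∀ F : H, lm * ‖F - P F‖ ^ 2 ≤ - ⟪L F, F⟫)
    -- (H2) macroscopic coercivity
    (hH2 : ∀ F : H, lM * ‖P F‖ ^ 2 ≤ ‖T (P F)‖ ^ 2)
    -- (H3) parabolic macroscopic dynamics
    (hH3 : ∀ F : H, P (T (P F)) = 0)
    -- (H4) bounded auxiliary operators
    (hH4 : ∀ F : H, ‖A (T (F - P F))‖ + ‖A (L F)‖ ≤ CM * ‖F - P F‖) :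
    ∃ ε₀ > (0 : ℝ), ∀ ε ∈ Set.Ioo 0 ε₀, ∀ F : H,
      (lm * lM ^ 2 / (CM ^ 2 * (1 + lM) ^ 2)) * ε
          * (1 / 2 * ‖F‖ ^ 2 + (2 * lm * lM / (CM ^ 2 * (1 + lM))) * ε * ⟪A F, F⟫)
        ≤ - (1 / ε) * ⟪L F, F⟫
            + (2 * lm * lM / (CM ^ 2 * (1 + lM))) * ε * ⟪A (T (P F)), F⟫
            - (2 * lm * lM / (CM ^ 2 * (1 + lM))) * ε * ⟪T (A F), F⟫
            + (2 * lm * lM / (CM ^ 2 * (1 + lM))) * ε * ⟪A (T (F - P F)), F⟫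
            - ((2 * lm * lM / (CM ^ 2 * (1 + lM))) * ε / ε) * ⟪A (L F), F⟫ := by
  classical
  set ζ := 2 * lm * lM / (CM ^ 2 * (1 + lM)) with hζdef
  set η := lm * lM ^ 2 / (CM ^ 2 * (1 + lM) ^ 2) with hηdef
  have h1lM : (0:ℝ) < 1 + lM := by linarith
  have hζ : 0 < ζ := by rw [hζdef]; positivity
  have hη : 0 < η := by rw [hηdef]; positivity
  set κ := lM / (1 + lM) with hκdef
  have hζκ : ζ * κ = 2 * η := by
    rw [hζdef, hκdef, hηdef]; field_simp
  have hζCM : ζ ^ 2 * CM ^ 2 = 4 * lm * η := by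
    rw [hζdef, hηdef]; field_simp; ring
  -- operator facts
  have hPadj : ContinuousLinearMap.adjoint P = P :=
    ContinuousLinearMap.isSelfAdjoint_iff'.mp hPsa
  have hf1 : ∀ a b : H, ⟪P a, b⟫ = ⟪a, P b⟫ := by
    intro a b
    conv_lhs => rw [← hPadj]
    rw [ContinuousLinearMap.adjoint_inner_left]
  have hPid : ∀ z : H, P (P z) = P z := by
    intro z
    have := ContinuousLinearMap.ext_iff.mp hPidem z
    simpa using this
  have hPA' : ∀ z : H, P (A z) = A z := by
    intro z
    have := ContinuousLinearMap.ext_iff.mp hPA z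
    simpa using this
  have hBadj : ∀ a b : H,
      ⟪(ContinuousLinearMap.adjoint (T ∘L P)) a, b⟫ = ⟪a, T (P b)⟫ := by
    intro a b
    rw [ContinuousLinearMap.adjoint_inner_left]
    simp [ContinuousLinearMap.comp_apply]
  refine ⟨min 1 (min (1 / (2 * ζ)) (Real.sqrt (lm / (5 * (ζ + 3 / 4 * η))))), ?_, ?_⟩
  · have hq : (0:ℝ) < lm / (5 * (ζ + 3 / 4 * η)) := by positivity
    exact lt_min one_pos (lt_min (by positivity) (Real.sqrt_pos.mpr hq))
  intro ε hε F
  have hε0 : 0 < ε := hε.1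
  have hεne : ε ≠ 0 := ne_of_gt hε0
  have hε1 : ε ≤ 1 := le_of_lt (lt_of_lt_of_le hε.2 (min_le_left _ _))
  have hζε : ζ * ε ≤ 1 / 2 := by
    have h2 : ε < 1 / (2 * ζ) := lt_of_lt_of_le hε.2
      (le_trans (min_le_right _ _) (min_le_left _ _))
    rw [lt_div_iff₀ (by positivity)] at h2
    linarith
  have hεsq : 5 * (ζ + 3 / 4 * η) * ε ^ 2 ≤ lm := by
    have h3 : ε < Real.sqrt (lm / (5 * (ζ + 3 / 4 * η))) :=
      lt_of_lt_of_le hε.2 (le_trans (min_le_right _ _) (min_le_right _ _))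
    have h4 := (Real.lt_sqrt hε0.le).mp h3
    rw [lt_div_iff₀ (by positivity)] at h4
    linarith
  set x := ‖F - P F‖ with hxdef
  set y := ‖P F‖ with hydef
  have hx0 : 0 ≤ x := norm_nonneg _
  have hy0 : 0 ≤ y := norm_nonneg _
  -- orthogonality
  have horth : ⟪F - P F, P F⟫ = 0 := by
    rw [inner_sub_left, hf1, hPid]
    ring
  have hFsq : ‖F‖ ^ 2 = x ^ 2 + y ^ 2 := by
    have hsplit : F = (F - P F) + P F := by abel
    calc ‖F‖ ^ 2 = ‖(F - P F) + P F‖ ^ 2 := by rw [← hsplit]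
      _ = x ^ 2 + 2 * ⟪F - P F, P F⟫ + y ^ 2 := norm_add_sq_real _ _
      _ = x ^ 2 + y ^ 2 := by rw [horth]; ring
  -- bounds on A F and T (A F)
  have hTAF : T (P (A F)) = T (A F) := by rw [hPA']
  have hvz : ⟪P F, T (A F)⟫ = 0 := by
    rw [← hTAF, hf1, hH3 (A F), inner_zero_right]
  have hFu : ⟪F, T (A F)⟫ = ⟪F - P F, T (A F)⟫ := by
    rw [inner_sub_left, hvz, sub_zero]
  have e1 : ‖A F‖ ^ 2 + ‖T (A F)‖ ^ 2 = ⟪F - P F, T (A F)⟫ := by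
    have h := hAdef F
    have h2 : (⟪A F, A F⟫:ℝ)
        + ⟪(ContinuousLinearMap.adjoint (T ∘L P)) ((T ∘L P) (A F)), A F⟫
        = ⟪(ContinuousLinearMap.adjoint (T ∘L P)) F, A F⟫ := by
      rw [← inner_add_left, h]
    rw [hBadj, hBadj] at h2
    simp only [ContinuousLinearMap.comp_apply] at h2
    rw [hTAF] at h2
    rw [real_inner_self_eq_norm_sq, real_inner_self_eq_norm_sq, hFu] at h2
    linarith [h2]
  have hcauchy1 : ⟪F - P F, T (A F)⟫ ≤ x * ‖T (A F)‖ := real_inner_le_norm _ _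
  have hq1 : ‖A F‖ ^ 2 + ‖T (A F)‖ ^ 2 ≤ x * ‖T (A F)‖ := e1.le.trans hcauchy1
  have hbounds := entropy_aux_bounds ‖A F‖ ‖T (A F)‖ x (norm_nonneg _) hx0 hq1
  have ht_le : ‖T (A F)‖ ≤ x := hbounds.1
  have ha_le : ‖A F‖ ≤ x / 2 := hbounds.2
  -- c3 bound
  have hc3 : ⟪T (A F), F⟫ ≤ x ^ 2 := by
    have heq : ⟪T (A F), F⟫ = ⟪F - P F, T (A F)⟫ := by
      rw [real_inner_comm, hFu]
    rw [heq]
    exact entropy_aux_c3 _ x ‖T (A F)‖ hcauchy1 ht_le hx0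
  -- c2 lower bound
  have hg := hAdef (T (P F))
  have hBv : (T ∘L P) (P F) = T (P F) := by
    simp [ContinuousLinearMap.comp_apply, hPid F]
  have heq2 : (ContinuousLinearMap.adjoint (T ∘L P)) ((T ∘L P) (P F - A (T (P F))))
      = A (T (P F)) := by
    rw [map_sub, map_sub, hBv, ← hg, add_sub_cancel_right]
  have hgv : ⟪A (T (P F)), P F⟫
      = ‖(T ∘L P) (P F - A (T (P F)))‖ ^ 2 + ‖A (T (P F))‖ ^ 2 := by
    conv_lhs => rw [← heq2]
    rw [ContinuousLinearMap.adjoint_inner_left]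
    have hsplit2 : (T ∘L P) (P F)
        = (T ∘L P) (P F - A (T (P F))) + (T ∘L P) (A (T (P F))) := by
      rw [map_sub]; abel
    rw [hsplit2, inner_add_right, real_inner_self_eq_norm_sq]
    have h3 : ⟪(T ∘L P) (P F - A (T (P F))), (T ∘L P) (A (T (P F)))⟫
        = ‖A (T (P F))‖ ^ 2 := by
      rw [← ContinuousLinearMap.adjoint_inner_left, heq2, real_inner_self_eq_norm_sq]
    rw [h3]
  have hPg : P (A (T (P F))) = A (T (P F)) := hPA' _
  have hPvg : P (P F - A (T (P F))) = P F - A (T (P F)) := by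
    rw [map_sub, hPid, hPg]
  have hH2' : lM * ‖P F - A (T (P F))‖ ^ 2 ≤ ‖(T ∘L P) (P F - A (T (P F)))‖ ^ 2 := by
    have hh := hH2 (P F - A (T (P F)))
    rw [hPvg] at hh
    have hcomp : (T ∘L P) (P F - A (T (P F))) = T (P F - A (T (P F))) := by
      simp only [ContinuousLinearMap.comp_apply, hPvg]
    rw [hcomp]
    exact hh
  have hglow : lM * ‖P F - A (T (P F))‖ ^ 2 + ‖A (T (P F))‖ ^ 2
      ≤ ⟪A (T (P F)), P F⟫ := by
    rw [hgv]; linarith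
  have htri : y ≤ ‖P F - A (T (P F))‖ + ‖A (T (P F))‖ := by
    calc y = ‖(P F - A (T (P F))) + A (T (P F))‖ := by rw [sub_add_cancel]
      _ ≤ _ := norm_add_le _ _
  have hgF : ⟪A (T (P F)), F⟫ = ⟪A (T (P F)), P F⟫ := by
    conv_lhs => rw [← hPg]
    rw [hf1]
  have hc2 : κ * y ^ 2 ≤ ⟪A (T (P F)), F⟫ := by
    rw [hgF]
    exact entropy_aux_c2 lM κ y ‖P F - A (T (P F))‖ ‖A (T (P F))‖ _ hlM hκdef htri hy0 hglow
  -- c4, c5 bounds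
  have hAzF : ∀ z : H, ⟪A z, F⟫ = ⟪A z, P F⟫ := by
    intro z
    conv_lhs => rw [← hPA' z]
    rw [hf1]
  have hb4 : |⟪A (T (F - P F)), F⟫| ≤ ‖A (T (F - P F))‖ * y := by
    rw [hAzF]; exact abs_real_inner_le_norm _ _
  have hb5 : |⟪A (L F), F⟫| ≤ ‖A (L F)‖ * y := by
    rw [hAzF]; exact abs_real_inner_le_norm _ _
  have hH4F : ‖A (T (F - P F))‖ + ‖A (L F)‖ ≤ CM * x := hH4 F
  -- c6 bound
  have hb6 : ⟪A F, F⟫ ≤ (x ^ 2 + y ^ 2) / 2 := by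
    refine entropy_aux_c6 x y ‖F‖ _ hFsq ?_
    have h1 : ⟪A F, F⟫ ≤ ‖A F‖ * ‖F‖ := real_inner_le_norm _ _
    have h2 : ‖A F‖ * ‖F‖ ≤ (x / 2) * ‖F‖ :=
      mul_le_mul_of_nonneg_right ha_le (norm_nonneg F)
    linarith
  have hH1F : lm * x ^ 2 ≤ - ⟪L F, F⟫ := hH1 F
  -- key inequality
  have key := entropy_aux_key lm η ζ κ CM ε x y (- ⟪L F, F⟫) ⟪A (T (P F)), F⟫
    ⟪T (A F), F⟫ ⟪A (T (F - P F)), F⟫ ⟪A (L F), F⟫ ⟪A F, F⟫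
    ‖A (T (F - P F))‖ ‖A (L F)‖
    hlm hη hζ hζε hεsq hζκ hζCM hH1F hc2 hc3 (abs_le.mp hb4).1 (abs_le.mp hb5).2
    hH4F (norm_nonneg _) (norm_nonneg _) hb6 hx0 hy0 hε0 hε1
  -- conclude
  refine le_of_mul_le_mul_left ?_ hε0
  calc ε * (η * ε * (1 / 2 * ‖F‖ ^ 2 + ζ * ε * ⟪A F, F⟫))
      = η * ε ^ 2 * (1 / 2 * (x ^ 2 + y ^ 2) + ζ * ε * ⟪A F, F⟫) := by
        rw [hFsq]; ring
    _ ≤ - ⟪L F, F⟫ + ζ * ε ^ 2 * ⟪A (T (P F)), F⟫ - ζ * ε ^ 2 * ⟪T (A F), F⟫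
        + ζ * ε ^ 2 * ⟪A (T (F - P F)), F⟫ - ζ * ε * ⟪A (L F), F⟫ := key
    _ = ε * (- (1 / ε) * ⟪L F, F⟫ + ζ * ε * ⟪A (T (P F)), F⟫ - ζ * ε * ⟪T (A F), F⟫
        + ζ * ε * ⟪A (T (F - P F)), F⟫ - (ζ * ε / ε) * ⟪A (L F), F⟫) := by
      field_simp
end

section
/- Let d = 1, M > 0, and let V satisfy (V1) and (V2). Let ρ⋆ = e^{−V−φ⋆} ∈ L¹(ℝ) be the solution of the Poisson–Boltzmann equation −φ⋆″ = e^{−V−φ⋆} with ∫ ρ⋆ dx = M, and f⋆(x,v) := ρ⋆(x)M(v). Let f = (1 + h) f⋆ be a nonnegative function in L¹(ℝ×ℝ) with finite relative entropy ∫∫ f log(f/f⋆) dx dv < ∞ and zero average ∫∫ h f⋆ dx dv = 0, and define ψ_h′(x) := −∫_{−∞}^x u_h(y) ρ⋆(y) dy where u_h(x) ρ⋆(x) = ∫_ℝ h(x,v) f⋆(x,v) dv. Then ‖ψ_h′‖_{L^∞(ℝ)}² ≤ 4M ∫∫ f log(f/f⋆) dx dv. -/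
open MeasureTheory Filter Real

noncomputable section

/-- Normalized Maxwellian on `ℝ`. -/
def maxw1 (v : ℝ) : ℝ := (2 * π) ^ (-(1 : ℝ) / 2) * exp (-v ^ 2 / 2)

/-- (V1) in dimension one: `V ∈ C⁰ ∩ W^{2,1}_loc(ℝ)` (taken here in the classical
sense `C²`) and `liminf_{|x|→∞} V = +∞`. -/
def condV1R (V : ℝ → ℝ) : Prop :=
  ContDiff ℝ 2 V ∧ Tendsto V (Bornology.cobounded ℝ) atTop

/-- (V2) in dimension one: `liminf_{|x|→∞} (V(x) − M|x|/2)/log|x| > 2`. -/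
def condV2R (M : ℝ) (V : ℝ → ℝ) : Prop :=
  2 < liminf (fun x : ℝ => (V x - M * |x| / 2) / Real.log |x|)
        (Bornology.cobounded ℝ)

/-! ### Auxiliary lemmas -/

lemma key_log {a c : ℝ} (ha : 0 ≤ a) (hc : 0 < c) : a - c ≤ a * Real.log (a / c) := by
  rcases ha.lt_or_eq with h0 | h0
  · have h1 : Real.log (c / a) ≤ c / a - 1 := Real.log_le_sub_one_of_pos (by positivity)
    have h2 : Real.log (c / a) = - Real.log (a / c) := by
      rw [← Real.log_inv]; congr 1; field_simp
    have h3 : 1 - c / a ≤ Real.log (a / c) := by rw [h2] at h1; linarith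
    have h4 : a * (1 - c / a) ≤ a * Real.log (a / c) := mul_le_mul_of_nonneg_left h3 ha
    have h5 : a * (1 - c / a) = a - c := by field_simp
    linarith
  · rw [← h0]; simp; linarith

lemma exp_bound2 {x : ℝ} (hx : |x| ≤ 1) : Real.exp x ≤ 1 + x + x ^ 2 := by
  have hb := Real.exp_bound hx (n := 2) (by norm_num)
  have h1 : ∑ m ∈ Finset.range 2, x ^ m / (Nat.factorial m) = 1 + x := by
    simp [Finset.sum_range_succ]
  rw [h1] at hb
  have h2 := (abs_le.mp hb).2
  have h3 : |x| ^ 2 = x ^ 2 := sq_abs x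
  rw [h3] at h2
  norm_num at h2
  nlinarith [sq_nonneg x]

lemma pointwise_ent {a b s : ℝ} (ha : 0 ≤ a) (hb : 0 < b) (hs0 : 0 ≤ s) (hs1 : s ≤ 1) :
    a - b + (s * |a - b| - s ^ 2 * b) ≤ a * Real.log (a / b) := by
  have hsabs : |s| ≤ 1 := by rw [abs_of_nonneg hs0]; exact hs1
  have he1 : Real.exp s ≤ 1 + s + s ^ 2 := exp_bound2 hsabs
  have he2 : Real.exp (-s) ≤ 1 - s + s ^ 2 := by
    have h := exp_bound2 (x := -s) (by rwa [abs_neg]); nlinarith [h]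
  rcases ha.lt_or_eq with hA | hA
  · have hlog : ∀ t : ℝ, a * Real.log (a / (b * Real.exp t)) = a * Real.log (a / b) - a * t := by
      intro t
      rw [Real.log_div (ne_of_gt hA) (by positivity),
        Real.log_mul (ne_of_gt hb) (Real.exp_ne_zero t), Real.log_exp,
        Real.log_div (ne_of_gt hA) (ne_of_gt hb)]
      ring
    rcases le_or_gt b a with hab | hab
    · have hk := key_log ha (show (0:ℝ) < b * Real.exp s by positivity)
      rw [hlog s] at hk
      rw [abs_of_nonneg (by linarith : (0:ℝ) ≤ a - b)]
      nlinarith [mul_le_mul_of_nonneg_left he1 hb.le]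
    · have hk := key_log ha (show (0:ℝ) < b * Real.exp (-s) by positivity)
      rw [hlog (-s)] at hk
      rw [abs_of_nonpos (by linarith : a - b ≤ 0)]
      nlinarith [mul_le_mul_of_nonneg_left he2 hb.le]
  · rw [← hA]
    rw [zero_mul]
    have hbb : |(0:ℝ) - b| = b := by rw [zero_sub, abs_neg, abs_of_pos hb]
    rw [hbb]
    nlinarith

/-- Csiszár–Kullback–Pinsker-type inequality: the squared `L¹`-distance is
controlled by `4 M` times the relative entropy. -/
lemma L1_sq_le_ent (M : ℝ) (hM : 0 < M) (f g : ℝ × ℝ → ℝ)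
    (hg : ∀ z, 0 < g z) (hgi : Integrable g) (hgM : (∫ z, g z) = M)
    (hf0 : ∀ z, 0 ≤ f z) (hfi : Integrable f)
    (hD0 : (∫ z, (f z - g z)) = 0)
    (hei : Integrable (fun z => f z * Real.log (f z / g z))) :
    (∫ z, |f z - g z|) ^ 2 ≤ 4 * M * ∫ z, f z * Real.log (f z / g z) := by
  set E := ∫ z, f z * Real.log (f z / g z) with hE
  set L := ∫ z, |f z - g z| with hL
  have hDi : Integrable (fun z => f z - g z) := hfi.sub hgi
  have hLi : Integrable (fun z => |f z - g z|) := hDi.abs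
  have hL0 : 0 ≤ L := integral_nonneg fun z => abs_nonneg _
  have hfM : (∫ z, f z) = M := by
    have h := integral_sub hfi hgi
    rw [hD0, hgM] at h
    linarith [h.symm]
  have key : ∀ s : ℝ, 0 ≤ s → s ≤ 1 → s * L ≤ E + s ^ 2 * M := by
    intro s h0 h1
    have hint2 : Integrable (fun z => s * |f z - g z| - s ^ 2 * g z) :=
      (hLi.const_mul s).sub (hgi.const_mul (s ^ 2))
    have hmono := integral_mono (hDi.add hint2) hei
      (fun z => pointwise_ent (hf0 z) (hg z) h0 h1)
    simp only [Pi.add_apply] at hmono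
    rw [integral_add hDi hint2, integral_sub (hLi.const_mul s) (hgi.const_mul (s ^ 2)),
      integral_const_mul, integral_const_mul, hD0, hgM] at hmono
    rw [← hL, ← hE] at hmono
    linarith
  have hE0 : 0 ≤ E := by
    have h := key 0 le_rfl zero_le_one
    simpa using h
  rcases hE0.lt_or_eq with hEpos | hEzero
  · rcases le_or_gt E M with hEM | hEM
    · set s := Real.sqrt (E / M) with hs
      have hsq : s ^ 2 = E / M := Real.sq_sqrt (by positivity)
      have hspos : 0 < s := Real.sqrt_pos.mpr (by positivity)
      have hs1 : s ≤ 1 := by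
        rw [hs, show (1:ℝ) = Real.sqrt 1 by simp]
        exact Real.sqrt_le_sqrt (by rw [div_le_one hM]; exact hEM)
      have hsM : s ^ 2 * M = E := by rw [hsq]; field_simp
      have hk := key s hspos.le hs1
      have hL2 : L ≤ 2 * (s * M) := by
        have h2 : s * L ≤ s * (2 * (s * M)) := by nlinarith [hk, hsM]
        exact le_of_mul_le_mul_left h2 hspos
      calc L ^ 2 ≤ (2 * (s * M)) ^ 2 := by nlinarith [hL2, hL0]
        _ = 4 * M * (s ^ 2 * M) := by ring
        _ = 4 * M * E := by rw [hsM]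
    · have hfg : L ≤ 2 * M := by
        have hpt : ∀ z, |f z - g z| ≤ f z + g z := by
          intro z
          have h := abs_sub (f z) (g z)
          rwa [abs_of_nonneg (hf0 z), abs_of_pos (hg z)] at h
        have h := integral_mono hLi (hfi.add hgi) hpt
        simp only [Pi.add_apply] at h
        rw [integral_add hfi hgi, hfM, hgM] at h
        rw [← hL] at h
        linarith
      nlinarith
  · have hLz : L ≤ 0 := by
      by_contra hc
      push_neg at hc
      set s := min 1 (L / (2 * M)) with hsdef
      have hs0 : 0 < s := lt_min one_pos (by positivity)
      have hs1 : s ≤ 1 := min_le_left _ _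
      have hk := key s hs0.le hs1
      rw [← hEzero] at hk
      have h2 : s * L ≤ s * (s * M) := by nlinarith [hk]
      have hLs : L ≤ s * M := le_of_mul_le_mul_left h2 hs0
      have hsl : s ≤ L / (2 * M) := min_le_right _ _
      have : s * M ≤ L / 2 := by
        calc s * M ≤ (L / (2 * M)) * M := mul_le_mul_of_nonneg_right hsl hM.le
          _ = L / 2 := by field_simp
      linarith
    have hLeq : L = 0 := le_antisymm hLz hL0
    rw [hLeq, ← hEzero]
    norm_num

lemma slice_bound (D : ℝ × ℝ → ℝ) (hD : Integrable D) (x : ℝ) :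
    |∫ y in Set.Iio x, ∫ v, D (y, v)| ≤ ∫ z, |D z| := by
  have hD' : Integrable D ((volume : Measure ℝ).prod volume) := by
    rwa [← MeasureTheory.Measure.volume_eq_prod]
  have hN : Integrable (fun y => ∫ v, ‖D (y, v)‖) := hD'.integral_norm_prod_left
  have hF : Integrable (fun y => ∫ v, D (y, v)) := hD'.integral_prod_left
  calc |∫ y in Set.Iio x, ∫ v, D (y, v)| ≤ ∫ y in Set.Iio x, ‖∫ v, D (y, v)‖ := by
        simpa [Real.norm_eq_abs] using
          norm_integral_le_integral_norm (μ := volume.restrict (Set.Iio x))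
            (fun y => ∫ v, D (y, v))
    _ ≤ ∫ y in Set.Iio x, ∫ v, ‖D (y, v)‖ := by
        refine setIntegral_mono_on hF.norm.integrableOn hN.integrableOn
          measurableSet_Iio (fun y _ => norm_integral_le_integral_norm _)
    _ ≤ ∫ y, ∫ v, ‖D (y, v)‖ :=
        setIntegral_le_integral hN
          (Filter.Eventually.of_forall fun y => integral_nonneg fun v => norm_nonneg _)
    _ = ∫ z, ‖D z‖ := by
        rw [MeasureTheory.Measure.volume_eq_prod]
        exact (integral_prod _ hD'.norm).symm
    _ = ∫ z, |D z| := by simp [Real.norm_eq_abs]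

/-- **Lemma 17** (free-energy control of the Poisson field in dimension one). Let
`d = 1`, `M > 0`, `V` satisfy (V1)–(V2), and let `ρ⋆ = e^{-V-φ⋆}` solve the
Poisson–Boltzmann equation `-φ⋆'' = e^{-V-φ⋆}` with `∫ ρ⋆ = M`, `f⋆ = ρ⋆ M(v)`. If
`f = (1+h)f⋆ ≥ 0` is integrable with finite relative entropy and `h` has zero
average, and `ψ_h'(x) = -∫_{-∞}^x u_h ρ⋆ dy` with `u_h ρ⋆ = ∫ h f⋆ dv`, then
`‖ψ_h'‖_{L^∞}² ≤ 4M ∫∫ f log(f/f⋆) dx dv`. -/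
theorem poisson_field_entropy_bound_dim_one
    (M : ℝ) (hM : 0 < M)
    (V : ℝ → ℝ) (hV1 : condV1R V) (hV2 : condV2R M V)
    (φs : ℝ → ℝ) (hφC2 : ContDiff ℝ 2 φs)
    (hPB : ∀ x, - deriv (deriv φs) x = exp (-(V x + φs x)))
    (hmass : (∫ x : ℝ, exp (-(V x + φs x))) = M)
    (f h : ℝ × ℝ → ℝ)
    (hf : ∀ z : ℝ × ℝ, f z = (1 + h z) * (exp (-(V z.1 + φs z.1)) * maxw1 z.2))
    (hfpos : ∀ z : ℝ × ℝ, 0 ≤ f z)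
    (hfint : Integrable f)
    -- finite relative entropy ∫∫ f log(f/f⋆) < ∞
    (hent : Integrable
      (fun z : ℝ × ℝ =>
        f z * Real.log (f z / (exp (-(V z.1 + φs z.1)) * maxw1 z.2))))
    -- zero average
    (hzero : (∫ z : ℝ × ℝ, h z * (exp (-(V z.1 + φs z.1)) * maxw1 z.2)) = 0) :
    ∀ x : ℝ,
      (- ∫ y in Set.Iio x, ∫ v : ℝ, h (y, v) * (exp (-(V y + φs y)) * maxw1 v)) ^ 2
        ≤ 4 * M * ∫ z : ℝ × ℝ,
            f z * Real.log (f z / (exp (-(V z.1 + φs z.1)) * maxw1 z.2)) := by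
  intro x
  have hρint : Integrable (fun y : ℝ => Real.exp (-(V y + φs y))) := by
    by_contra hc
    rw [integral_undef hc] at hmass
    exact absurd hmass (by linarith)
  have hmaxint : Integrable maxw1 := by
    have hfun : (fun v : ℝ => Real.exp (-(1/2 : ℝ) * v ^ 2))
        = fun v : ℝ => Real.exp (-v ^ 2 / 2) := by
      funext v; ring_nf
    unfold maxw1
    exact Integrable.const_mul (hfun ▸ integrable_exp_neg_mul_sq (by norm_num)) _
  have hmax1 : (∫ v, maxw1 v) = 1 := by
    unfold maxw1
    rw [integral_const_mul]
    have hfun : (fun v : ℝ => Real.exp (-v ^ 2 / 2))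
        = fun v : ℝ => Real.exp (-(1/2 : ℝ) * v ^ 2) := by
      funext v; ring_nf
    rw [hfun, integral_gaussian, show (π / (1/2 : ℝ)) = 2 * π by ring,
      Real.sqrt_eq_rpow, ← Real.rpow_add (by positivity)]
    norm_num
  have hg : ∀ z : ℝ × ℝ, 0 < Real.exp (-(V z.1 + φs z.1)) * maxw1 z.2 := by
    intro z
    have : 0 < maxw1 z.2 := by unfold maxw1; positivity
    positivity
  have hgi : Integrable (fun z : ℝ × ℝ => Real.exp (-(V z.1 + φs z.1)) * maxw1 z.2) := by
    have hh := hρint.mul_prod hmaxint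
    rwa [← MeasureTheory.Measure.volume_eq_prod] at hh
  have hgM : (∫ z : ℝ × ℝ, Real.exp (-(V z.1 + φs z.1)) * maxw1 z.2) = M := by
    rw [MeasureTheory.Measure.volume_eq_prod,
      integral_prod_mul (fun y : ℝ => Real.exp (-(V y + φs y))) maxw1, hmass, hmax1, mul_one]
  have hD0 : (∫ z : ℝ × ℝ, (f z - Real.exp (-(V z.1 + φs z.1)) * maxw1 z.2)) = 0 := by
    have heq : (fun z : ℝ × ℝ => f z - Real.exp (-(V z.1 + φs z.1)) * maxw1 z.2)
        = fun z : ℝ × ℝ => h z * (Real.exp (-(V z.1 + φs z.1)) * maxw1 z.2) := by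
      funext z; rw [hf z]; ring
    rw [show (∫ z : ℝ × ℝ, (f z - Real.exp (-(V z.1 + φs z.1)) * maxw1 z.2))
        = ∫ z : ℝ × ℝ, h z * (Real.exp (-(V z.1 + φs z.1)) * maxw1 z.2) from by rw [heq]]
    exact hzero
  have hmain := L1_sq_le_ent M hM f
    (fun z : ℝ × ℝ => Real.exp (-(V z.1 + φs z.1)) * maxw1 z.2)
    hg hgi hgM hfpos hfint hD0 hent
  have hinner : ∀ y v : ℝ, h (y, v) * (Real.exp (-(V y + φs y)) * maxw1 v)
      = f (y, v) - Real.exp (-(V y + φs y)) * maxw1 v := by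
    intro y v
    rw [hf (y, v)]
    ring
  simp only [hinner]
  have hslice := slice_bound
    (fun z : ℝ × ℝ => f z - Real.exp (-(V z.1 + φs z.1)) * maxw1 z.2)
    (hfint.sub hgi) x
  simp only [] at hslice
  rw [neg_sq]
  have habs := abs_le.mp hslice
  calc (∫ y in Set.Iio x, ∫ v : ℝ, (f (y, v) - Real.exp (-(V y + φs y)) * maxw1 v)) ^ 2
      ≤ (∫ z : ℝ × ℝ, |f z - Real.exp (-(V z.1 + φs z.1)) * maxw1 z.2|) ^ 2 :=
        sq_le_sq' (by linarith [habs.1]) habs.2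
    _ ≤ 4 * M * ∫ z : ℝ × ℝ,
          f z * Real.log (f z / (Real.exp (-(V z.1 + φs z.1)) * maxw1 z.2)) := hmain
end
end
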